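/- Let S be an (m+1)×(m+1) symmetric unitary complex matrix with S_{0l} ≠ 0 for all l, let N_{ij}^k = Σ_l S_{il} S_{jl} conj(S_{lk}) / S_{0l} be the fusion structure constants on ℂ^{m+1} with basis {v_i}, and set w_i = S_{0i} Σ_{j=0}^m conj(S_{ji}) v_j for i = 0,…,m. Then the w_i are orthogonal idempotents for the fusion product (w_i · w_j = δ_{ij} w_i) and Σ_{i=0}^m w_i = v_0. -/

import Mathlib

open Matrix Finset

theorem stmt_7 (m : ℕ) (S : Matrix (Fin (m + 1)) (Fin (m + 1)) ℂ)
    (hsymm : Sᵀ = S) (hunit : S * Sᴴ = 1) (hne : ∀ l, S 0 l ≠ 0)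
    (N : Fin (m + 1) → Fin (m + 1) → Fin (m + 1) → ℂ)
    (hN : ∀ i j k, N i j k = ∑ l, S i l * S j l * (starRingEnd ℂ) (S l k) / S 0 l)
    (mul : (Fin (m + 1) → ℂ) → (Fin (m + 1) → ℂ) → (Fin (m + 1) → ℂ))
    (hmul : ∀ x y k, mul x y k = ∑ i, ∑ j, x i * y j * N i j k)
    (w : Fin (m + 1) → Fin (m + 1) → ℂ)
    (hw : ∀ i j, w i j = S 0 i * (starRingEnd ℂ) (S j i)) :
    (∀ i j, mul (w i) (w j) = if i = j then w i else 0) ∧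
    (∑ i, w i) = Pi.single (0 : Fin (m + 1)) (1 : ℂ) := by
  have hunit' : Sᴴ * S = 1 := mul_eq_one_comm.mp hunit
  have h1 : ∀ a b : Fin (m+1), (∑ l, S a l * (starRingEnd ℂ) (S b l)) = if a = b then 1 else 0 := by
    intro a b
    have := congrFun (congrFun hunit a) b
    simpa [Matrix.mul_apply, Matrix.conjTranspose_apply, Matrix.one_apply] using this
  have h2 : ∀ a b : Fin (m+1), (∑ i, (starRingEnd ℂ) (S i a) * S i b) = if a = b then 1 else 0 := by
    intro a b
    have := congrFun (congrFun hunit' a) b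
    simpa [Matrix.mul_apply, Matrix.conjTranspose_apply, Matrix.one_apply] using this
  have hS : ∀ a b : Fin (m+1), S a b = S b a := by
    intro a b
    conv_lhs => rw [← hsymm]
    rfl
  have hA : ∀ (a : Fin (m+1)) (l : Fin (m+1)),
      (∑ i', w a i' * S i' l) = S 0 a * (if a = l then 1 else 0) := by
    intro a l
    simp only [hw]
    rw [show (∑ i', S 0 a * (starRingEnd ℂ) (S i' a) * S i' l)
        = S 0 a * ∑ i', (starRingEnd ℂ) (S i' a) * S i' l by
      rw [Finset.mul_sum]; exact Finset.sum_congr rfl fun _ _ => by ring]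
    rw [h2]
  constructor
  · intro i j
    funext k
    rw [hmul]
    have e1 : (∑ i', ∑ j', w i i' * w j j' * N i' j' k)
        = ∑ l, (∑ i', w i i' * S i' l) * (∑ j', w j j' * S j' l)
            * ((starRingEnd ℂ) (S l k) / S 0 l) := by
      calc (∑ i', ∑ j', w i i' * w j j' * N i' j' k)
          = ∑ i', ∑ l, ∑ j', w i i' * w j j' *
              (S i' l * S j' l * (starRingEnd ℂ) (S l k) / S 0 l) := by
            refine Finset.sum_congr rfl fun i' _ => ?_
            rw [← Finset.sum_comm]
            refine Finset.sum_congr rfl fun j' _ => ?_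
            rw [hN, Finset.mul_sum]
        _ = ∑ l, ∑ i', ∑ j', w i i' * w j j' *
              (S i' l * S j' l * (starRingEnd ℂ) (S l k) / S 0 l) := Finset.sum_comm
        _ = ∑ l, (∑ i', w i i' * S i' l) * (∑ j', w j j' * S j' l)
              * ((starRingEnd ℂ) (S l k) / S 0 l) := by
            refine Finset.sum_congr rfl fun l _ => ?_
            rw [Finset.sum_mul_sum, Finset.sum_mul]
            refine Finset.sum_congr rfl fun i' _ => ?_
            rw [Finset.sum_mul]
            refine Finset.sum_congr rfl fun j' _ => ?_
            ring
    rw [e1]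
    simp only [hA]
    by_cases hij : i = j
    · subst hij
      rw [Finset.sum_eq_single i]
      · simp only [eq_self_iff_true, if_true]
        rw [hw, hS k i]
        field_simp [hne i]
      · intro b _ hb
        rw [if_neg (show ¬ i = b from fun h => hb h.symm)]
        ring
      · intro h; exact absurd (Finset.mem_univ i) h
    · rw [if_neg hij]
      have : ∀ l : Fin (m+1), S 0 i * (if i = l then 1 else 0) *
          (S 0 j * (if j = l then 1 else 0)) * ((starRingEnd ℂ) (S l k) / S 0 l) = 0 := by
        intro l
        by_cases hi : i = l
        · subst hi
          rw [if_neg (show ¬ j = i from fun h => hij h.symm)]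
          ring
        · rw [if_neg hi]
          ring
      simp only [this, Finset.sum_const_zero]
      rfl
  · funext k
    simp only [Finset.sum_apply, hw]
    rw [show (∑ i, S 0 i * (starRingEnd ℂ) (S k i)) = if (0 : Fin (m+1)) = k then 1 else 0 from h1 0 k]
    by_cases hk : k = 0
    · subst hk; simp
    · rw [if_neg (fun h => hk h.symm), Pi.single_apply, if_neg hk]
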